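/- For all integers n ≥ 1, the following identity holds in Q(u_1,…,u_n,v_1,…,v_n). Let G be the group of pairs w = (σ,η) with σ ∈ S_n and η ∈ {±1}^n, acting by the Q-algebra automorphism sending u_i to u_{σ(i)}^{η_i} and fixing each v_j, with sgn(w) := sgn(σ)·∏_{i=1}^n η_i. Then ∏_{1≤i<j≤n}(u_i/u_j − u_j/u_i)(u_i u_j − u_i^{−1}u_j^{−1}) · ∏_{i=1}^n (u_i^2 − u_i^{−2}) · ∏_{1≤j<k≤n}(v_j/v_k − v_k/v_j)(v_j v_k − v_j^{−1}v_k^{−1}) · ∏_{j=1}^n (v_j − v_j^{−1}) = (∏_{i=1}^n ∏_{j=1}^n (u_i v_j + u_i^{−1}v_j^{−1})(u_i/v_j + v_j/u_i)) · (∏_{i=1}^n (u_i + u_i^{−1})) · Σ_{w=(σ,η)∈G} sgn(w) · (∏_{i=1}^{n} u_{σ(i)}^{η_i}) · (∏_{j=1}^n v_j^{−1}) / ∏_{i=1}^{n} (1 + u_{σ(i)}^{2η_i}·v_i^{−2}). -/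

import Mathlib

open Finset Equiv Matrix


theorem cauchy_det {F : Type*} [Field F] :
    ∀ {n : ℕ} (a b : Fin n → F), (∀ i j, a i + b j ≠ 0) →
    (Matrix.of fun i j => (a i + b j)⁻¹).det
      = (∏ i, ∏ j ∈ Ioi i, ((a j - a i) * (b j - b i))) / (∏ i, ∏ j, (a i + b j)) := by
  intro n
  induction n with
  | zero => intro a b _; simp [Matrix.det_fin_zero]
  | succ n ih =>
    intro a b h
    -- step 1 : subtract row 0 from all other rows
    have e1 : (Matrix.of fun i j : Fin (n+1) => (a i + b j)⁻¹).det =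
        (Matrix.of fun i j : Fin (n+1) =>
          Matrix.vecCons ((a 0 + b j)⁻¹)
            (fun i => (a i.succ + b j)⁻¹ - (a 0 + b j)⁻¹) i).det := by
      refine det_eq_of_forall_row_eq_smul_add_const (Matrix.vecCons 0 1) 0
        (Matrix.cons_val_zero 0 1) ?_
      intro i j
      refine Fin.cases ?_ (fun i => ?_) i
      · simp
      · simp [Matrix.cons_val_succ]
    -- step 2 : rewrite the subtracted rows in factored form
    have e2 : (Matrix.of fun i j : Fin (n+1) =>
          Matrix.vecCons ((a 0 + b j)⁻¹)
            (fun i => (a i.succ + b j)⁻¹ - (a 0 + b j)⁻¹) i)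
        = (Matrix.of fun i j : Fin (n+1) =>
          (Matrix.vecCons 1 (fun i => a 0 - a i.succ) i) *
          (Matrix.vecCons ((a 0 + b j)⁻¹)
            (fun i => (a 0 + b j)⁻¹ * (a i.succ + b j)⁻¹) i)) := by
      ext i j
      refine Fin.cases ?_ (fun i => ?_) i
      · simp
      · simp only [Matrix.of_apply, Matrix.cons_val_succ]
        rw [inv_sub_inv (h i.succ j) (h 0 j), div_eq_mul_inv, mul_inv]
        ring
    -- step 3 : pull the row factors out
    have e3 : (Matrix.of fun i j : Fin (n+1) =>
          (Matrix.vecCons 1 (fun i => a 0 - a i.succ) i) *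
          (Matrix.vecCons ((a 0 + b j)⁻¹)
            (fun i => (a 0 + b j)⁻¹ * (a i.succ + b j)⁻¹) i)).det
        = (∏ i : Fin n, (a 0 - a i.succ)) *
          (Matrix.of fun i j : Fin (n+1) =>
            Matrix.vecCons ((a 0 + b j)⁻¹)
              (fun i => (a 0 + b j)⁻¹ * (a i.succ + b j)⁻¹) i).det := by
      refine (det_mul_column (fun i : Fin (n+1) => Matrix.vecCons 1 (fun i => a 0 - a i.succ) i)
        (Matrix.of fun i j : Fin (n+1) => Matrix.vecCons ((a 0 + b j)⁻¹)
          (fun i => (a 0 + b j)⁻¹ * (a i.succ + b j)⁻¹) i)).trans ?_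
      congr 1
      rw [Fin.prod_univ_succ]
      simp
    -- step 4 : pull the column factors out
    have e4 : (Matrix.of fun i j : Fin (n+1) =>
            Matrix.vecCons ((a 0 + b j)⁻¹)
              (fun i => (a 0 + b j)⁻¹ * (a i.succ + b j)⁻¹) i).det
        = (∏ j : Fin (n+1), (a 0 + b j)⁻¹) *
          (Matrix.of fun i j : Fin (n+1) =>
            Matrix.vecCons 1 (fun i => (a i.succ + b j)⁻¹) i).det := by
      rw [← det_mul_row (fun j => (a 0 + b j)⁻¹)]
      congr 1
      ext i j
      refine Fin.cases ?_ (fun i => ?_) i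
      · simp
      · simp [Matrix.cons_val_succ]
    -- step 5 : transpose
    have e5 : (Matrix.of fun i j : Fin (n+1) =>
            Matrix.vecCons 1 (fun i => (a i.succ + b j)⁻¹) i).det
        = (Matrix.of fun i j : Fin (n+1) =>
            Matrix.vecCons 1 (fun p => (a p.succ + b i)⁻¹) j).det := by
      rw [← Matrix.det_transpose]
      congr 1
    -- step 6 : subtract row 0 (old column 0) from the other rows
    have e6 : (Matrix.of fun i j : Fin (n+1) =>
            Matrix.vecCons 1 (fun p => (a p.succ + b i)⁻¹) j).det
        = (Matrix.of fun i j : Fin (n+1) =>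
            Matrix.vecCons (Matrix.vecCons 1 (fun p => (a p.succ + b 0)⁻¹) j)
              (fun i' => Matrix.vecCons 0
                (fun p => (b 0 - b i'.succ) *
                  ((a p.succ + b 0)⁻¹ * (a p.succ + b i'.succ)⁻¹)) j) i).det := by
      refine det_eq_of_forall_row_eq_smul_add_const (Matrix.vecCons 0 1) 0
        (Matrix.cons_val_zero 0 1) ?_
      intro i j
      refine Fin.cases ?_ (fun i => ?_) i
      · simp
      · refine Fin.cases ?_ (fun j => ?_) j
        · simp
        · simp only [Matrix.of_apply, Matrix.cons_val_succ, Matrix.cons_val_zero,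
            Matrix.cons_val_one, Matrix.head_cons, Pi.one_apply, one_mul]
          rw [show ((a j.succ + b i.succ)⁻¹ :F) =
              (b 0 - b i.succ) * ((a j.succ + b 0)⁻¹ * (a j.succ + b i.succ)⁻¹) + (a j.succ + b 0)⁻¹
              ↔ (a j.succ + b i.succ)⁻¹ - (a j.succ + b 0)⁻¹ =
                (b 0 - b i.succ) * ((a j.succ + b 0)⁻¹ * (a j.succ + b i.succ)⁻¹) from
            by constructor <;> intro hh <;> linear_combination hh]
          rw [inv_sub_inv (h j.succ i.succ) (h j.succ 0), div_eq_mul_inv, mul_inv]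
          ring
    -- step 7 : expand along the first column
    have e7 : (Matrix.of fun i j : Fin (n+1) =>
            Matrix.vecCons (Matrix.vecCons 1 (fun p => (a p.succ + b 0)⁻¹) j)
              (fun i' => Matrix.vecCons 0
                (fun p => (b 0 - b i'.succ) *
                  ((a p.succ + b 0)⁻¹ * (a p.succ + b i'.succ)⁻¹)) j) i).det
        = (Matrix.of fun i j : Fin n =>
            (b 0 - b i.succ) *
              ((a j.succ + b 0)⁻¹ * (a j.succ + b i.succ)⁻¹)).det := by
      rw [det_succ_column_zero, Fin.sum_univ_succ]
      simp only [Matrix.of_apply, Matrix.cons_val_zero, Fin.val_zero, pow_zero, one_mul,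
        Matrix.cons_val_succ, zero_mul, mul_zero, Finset.sum_const_zero, add_zero,
        Fin.succAbove_zero]
      exact congrArg Matrix.det (by ext i j; simp [Matrix.submatrix_apply, Matrix.cons_val_succ])
    -- step 8 : pull row factors out of the minor
    have e8 : (Matrix.of fun i j : Fin n =>
            (b 0 - b i.succ) *
              ((a j.succ + b 0)⁻¹ * (a j.succ + b i.succ)⁻¹)).det
        = (∏ i : Fin n, (b 0 - b i.succ)) *
          (Matrix.of fun i j : Fin n =>
            (a j.succ + b 0)⁻¹ * (a j.succ + b i.succ)⁻¹).det := by
      exact det_mul_column (fun i : Fin n => b 0 - b (Fin.succ i))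
        (Matrix.of fun i j : Fin n => (a j.succ + b 0)⁻¹ * (a j.succ + b i.succ)⁻¹)
    -- step 9 : pull column factors out of the minor
    have e9 : (Matrix.of fun i j : Fin n =>
            (a j.succ + b 0)⁻¹ * (a j.succ + b i.succ)⁻¹).det
        = (∏ j : Fin n, (a j.succ + b 0)⁻¹) *
          (Matrix.of fun i j : Fin n => (a j.succ + b i.succ)⁻¹).det := by
      exact det_mul_row (fun j : Fin n => (a (Fin.succ j) + b 0)⁻¹)
        (Matrix.of fun i j : Fin n => (a j.succ + b i.succ)⁻¹)
    -- step 10 : transpose the minor and apply the induction hypothesis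
    have e10 : (Matrix.of fun i j : Fin n => (a j.succ + b i.succ)⁻¹).det
        = (∏ i : Fin n, ∏ j ∈ Ioi i, ((a j.succ - a i.succ) * (b j.succ - b i.succ))) /
          (∏ i : Fin n, ∏ j : Fin n, (a i.succ + b j.succ)) := by
      rw [show (Matrix.of fun i j : Fin n => (a j.succ + b i.succ)⁻¹)
          = (Matrix.of fun i j : Fin n => (a i.succ + b j.succ)⁻¹)ᵀ from rfl,
        Matrix.det_transpose]
      exact ih (fun i => a i.succ) (fun j => b j.succ) (fun i j => h i.succ j.succ)
    rw [e1, e2, e3, e4, e5, e6, e7, e8, e9, e10]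
    -- final bookkeeping
    have hDa : (∏ j : Fin (n+1), (a 0 + b j)) ≠ 0 :=
      Finset.prod_ne_zero_iff.mpr fun j _ => h 0 j
    have hDb : (∏ j : Fin n, (a j.succ + b 0)) ≠ 0 :=
      Finset.prod_ne_zero_iff.mpr fun j _ => h j.succ 0
    have hD : (∏ i : Fin n, ∏ j : Fin n, (a i.succ + b j.succ)) ≠ 0 :=
      Finset.prod_ne_zero_iff.mpr fun i _ => Finset.prod_ne_zero_iff.mpr fun j _ => h i.succ j.succ
    rw [Finset.prod_inv_distrib, Finset.prod_inv_distrib]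
    -- rewrite the target's numerator and denominator
    rw [Fin.prod_univ_succ (f := fun i => ∏ j ∈ Ioi i, ((a j - a i) * (b j - b i))),
      Fin.prod_Ioi_zero]
    simp_rw [Fin.prod_Ioi_succ]
    rw [Fin.prod_univ_succ (f := fun i => ∏ j : Fin (n+1), (a i + b j))]
    conv_rhs => rw [show (∏ i : Fin n, ∏ j : Fin (n+1), (a i.succ + b j))
        = ∏ i : Fin n, ((a i.succ + b 0) * ∏ j : Fin n, (a i.succ + b j.succ)) from
      Finset.prod_congr rfl fun i _ => Fin.prod_univ_succ _]
    rw [show (∏ i : Fin n, ((a (Fin.succ i) + b 0) * ∏ j : Fin n, (a (Fin.succ i) + b (Fin.succ j))))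
        = (∏ i : Fin n, (a (Fin.succ i) + b 0)) *
            ∏ i : Fin n, ∏ j : Fin n, (a (Fin.succ i) + b (Fin.succ j)) from
      Finset.prod_mul_distrib]
    have hsign : (∏ j : Fin n, ((a (Fin.succ j) - a 0) * (b (Fin.succ j) - b 0)))
        = (∏ i : Fin n, (a 0 - a (Fin.succ i))) * (∏ i : Fin n, (b 0 - b (Fin.succ i))) := by
      rw [← Finset.prod_mul_distrib]
      exact Finset.prod_congr rfl fun i _ => by ring
    rw [hsign]
    field_simp

theorem cauchy_sum {F : Type*} [Field F] {n : ℕ} (a b : Fin n → F)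
    (h : ∀ i j, a i + b j ≠ 0) :
    ∑ σ : Perm (Fin n), ((Perm.sign σ : ℤ) : F) * ∏ i, (a (σ i) + b i)⁻¹
      = (∏ i, ∏ j ∈ Ioi i, ((a j - a i) * (b j - b i))) / (∏ i, ∏ j, (a i + b j)) := by
  rw [← cauchy_det a b h, Matrix.det_apply]
  exact Finset.sum_congr rfl fun σ _ => by
    rw [Units.smul_def, zsmul_eq_mul]
    rfl

-- pointwise lemma: the eta-sum at one site
theorem etapoint {K : Type*} [Field K] (U V : K) (hU : U ≠ 0) (hV : V ≠ 0)
    (h2 : U^2 + V^2 ≠ 0) (h1 : U^2*V^2 + 1 ≠ 0) :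
    ∑ e : ℤˣ, (((e:ℤ)):K) * U^((e:ℤ)) * V⁻¹ * (1 + U^(2*((e:ℤ))) * V^(-2:ℤ))⁻¹
    = V⁻¹ * (U * V^2 * (U^2-1) * (V^2-1) * ((U^2+V^2)*(U^2*V^2+1))⁻¹) := by
  have huniv : (Finset.univ : Finset ℤˣ) = {1, -1} := by decide
  rw [huniv, Finset.sum_insert (by decide), Finset.sum_singleton]
  have e1 : ((1:ℤˣ):ℤ) = 1 := rfl
  have e2 : (((-1:ℤˣ)):ℤ) = -1 := rfl
  rw [e1, e2]
  have g1 : U ^ (2*(1:ℤ)) = U^(2:ℕ) := by norm_num [zpow_ofNat]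
  have g2 : U ^ (2*(-1:ℤ)) = (U^(2:ℕ))⁻¹ := by
    rw [show (2*(-1:ℤ)) = -2 by norm_num, _root_.zpow_neg]; norm_num [zpow_ofNat]
  have g3 : V ^ (-2:ℤ) = (V^(2:ℕ))⁻¹ := by rw [_root_.zpow_neg]; norm_num [zpow_ofNat]
  have g4 : U ^ (1:ℤ) = U := zpow_one U
  have g5 : U ^ (-1:ℤ) = U⁻¹ := by rw [_root_.zpow_neg, zpow_one]
  rw [g1, g2, g3, g4, g5]
  have k1 : ((1:K) + U^2 * (V^2)⁻¹) = (U^2+V^2) / V^2 := by field_simp; try ring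
  have k2 : ((1:K) + (U^2)⁻¹ * (V^2)⁻¹) = (U^2*V^2+1) / (U^2*V^2) := by field_simp; try ring
  rw [k1, k2, inv_div, inv_div]
  push_cast
  field_simp
  ring

-- pointwise lemma: regrouping one site of the sigma-product
theorem sitepoint {K : Type*} [Field K] (U V : K) (hU : U ≠ 0) (hV : V ≠ 0)
    (h2 : U^2 + V^2 ≠ 0) (h1 : U^2*V^2 + 1 ≠ 0) :
    V⁻¹ * (U * V^2 * (U^2-1) * (V^2-1) * ((U^2+V^2)*(U^2*V^2+1))⁻¹)
    = (U * (U^2-1) * (U^2)⁻¹) *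
      ((V⁻¹ * V^2 * (V^2-1) * (V^2)⁻¹) * (U^2 + (U^2)⁻¹ + (V^2 + (V^2)⁻¹))⁻¹) := by
  have hAB : U^2 + (U^2)⁻¹ + (V^2 + (V^2)⁻¹) = ((U^2+V^2)*(U^2*V^2+1)) * (U^2*V^2)⁻¹ := by
    field_simp; ring
  rw [hAB]
  simp only [mul_inv, inv_inv]
  generalize (U^2+V^2)⁻¹ = W1
  generalize (U^2*V^2+1)⁻¹ = W2
  field_simp

-- pointwise lemma: prefactor entry equals A i + B j
theorem prepoint {K : Type*} [Field K] (U V : K) (hU : U ≠ 0) (hV : V ≠ 0) :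
    (U * V + U⁻¹ * V⁻¹) * (U / V + V / U) = U^2 + (U^2)⁻¹ + (V^2 + (V^2)⁻¹) := by
  field_simp
  ring

-- pointwise lemma: pair factor
theorem pairpoint {K : Type*} [Field K] (P Q R S : K) (hP : P ≠ 0) (hQ : Q ≠ 0)
    (hR : R ≠ 0) (hS : S ≠ 0) :
    ((Q^2 + (Q^2)⁻¹) - (P^2 + (P^2)⁻¹)) * ((S^2 + (S^2)⁻¹) - (R^2 + (R^2)⁻¹))
    = ((P / Q - Q / P) * (P * Q - P⁻¹ * Q⁻¹)) * ((R / S - S / R) * (R * S - R⁻¹ * S⁻¹)) := by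
  field_simp
  ring

theorem dupoint {K : Type*} [Field K] (U : K) (hU : U ≠ 0) :
    (U + U⁻¹) * (U * (U^2-1) * (U^2)⁻¹) = U ^ (2:ℤ) - U ^ (-2:ℤ) := by
  have g1 : U ^ (2:ℤ) = U^(2:ℕ) := by norm_num [zpow_ofNat]
  have g2 : U ^ (-2:ℤ) = (U^(2:ℕ))⁻¹ := by rw [_root_.zpow_neg]; norm_num [zpow_ofNat]
  rw [g1, g2]
  field_simp
  ring

theorem dvpoint {K : Type*} [Field K] (V : K) (hV : V ≠ 0) :
    V⁻¹ * V^2 * (V^2-1) * (V^2)⁻¹ = V - V⁻¹ := by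
  field_simp

theorem inner_sum' {n : ℕ} {K : Type*} [Field K] (U V : Fin n → K) (s : ℤˣ)
    (hU : ∀ i, U i ≠ 0) (hV : ∀ i, V i ≠ 0)
    (h2 : ∀ i, (U i)^2 + (V i)^2 ≠ 0) (h1 : ∀ i, (U i)^2 * (V i)^2 + 1 ≠ 0) :
    (∑ η : Fin n → ℤˣ, (((s * ∏ i, η i : ℤˣ) : ℤ) : K) *
        ((∏ i, U i ^ ((η i : ℤ))) * (∏ j, (V j)⁻¹) /
          ∏ i, (1 + U i ^ (2 * ((η i : ℤ))) * V i ^ (-2:ℤ))))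
    = ((s : ℤ) : K) *
        ∏ i, ((V i)⁻¹ * (U i * (V i)^2 * ((U i)^2-1) * ((V i)^2-1) *
          (((U i)^2+(V i)^2)*((U i)^2*(V i)^2+1))⁻¹)) := by
  have step : ∀ η : Fin n → ℤˣ,
      (((s * ∏ i, η i : ℤˣ) : ℤ) : K) *
        ((∏ i, U i ^ ((η i : ℤ))) * (∏ j, (V j)⁻¹) /
          ∏ i, (1 + U i ^ (2 * ((η i : ℤ))) * V i ^ (-2:ℤ)))
      = ((s : ℤ) : K) * ∏ i, ((((η i : ℤ)) : K) * U i ^ ((η i : ℤ)) * (V i)⁻¹ *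
          (1 + U i ^ (2 * ((η i : ℤ))) * V i ^ (-2:ℤ))⁻¹) := by
    intro η
    have c1 : (((s * ∏ i, η i : ℤˣ) : ℤ) : K)
        = ((s : ℤ) : K) * ∏ i, ((((η i : ℤ)) : K)) := by
      rw [Units.val_mul, Int.cast_mul]
      congr 1
      rw [show ((∏ i, η i : ℤˣ) : ℤ) = ∏ i, ((η i : ℤ)) from map_prod (Units.coeHom ℤ) _ _,
        Int.cast_prod]
    rw [c1, div_eq_mul_inv]
    simp only [Finset.prod_mul_distrib, Finset.prod_inv_distrib]
    ring
  rw [Finset.sum_congr rfl fun η _ => step η, ← Finset.mul_sum,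
    ← Fintype.prod_sum (fun (i : Fin n) (e : ℤˣ) => (((e:ℤ)):K) * U i ^ ((e:ℤ)) * (V i)⁻¹ *
      (1 + U i ^ (2 * ((e:ℤ))) * V i ^ (-2:ℤ))⁻¹)]
  exact congrArg _ (Finset.prod_congr rfl fun i _ => etapoint (U i) (V i) (hU i) (hV i) (h2 i) (h1 i))

theorem rhs_eval {n : ℕ} {K : Type*} [Field K] (u v : Fin n → K)
    (hu : ∀ i, u i ≠ 0) (hv : ∀ j, v j ≠ 0)
    (h2 : ∀ i j, (u i)^2 + (v j)^2 ≠ 0) (h1 : ∀ i j, (u i)^2 * (v j)^2 + 1 ≠ 0) :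
    (∏ i : Fin n, ∏ j : Fin n,
        ((u i * v j + (u i)⁻¹ * (v j)⁻¹) * (u i / v j + v j / u i))) *
      (∏ i : Fin n, (u i + (u i)⁻¹)) *
      (∑ σ : Equiv.Perm (Fin n), ∑ η : Fin n → ℤˣ,
        (((Equiv.Perm.sign σ * ∏ i, η i : ℤˣ) : ℤ) : K) *
          ((∏ i : Fin n, u (σ i) ^ ((η i : ℤ))) *
           (∏ j : Fin n, (v j)⁻¹) /
           ∏ i : Fin n, (1 + u (σ i) ^ (2 * ((η i) : ℤ)) * v i ^ (-2 : ℤ))))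
    = (∏ i : Fin n, ∏ j ∈ Finset.Ioi i,
        ((u i / u j - u j / u i) * (u i * u j - (u i)⁻¹ * (u j)⁻¹))) *
      (∏ i : Fin n, (u i ^ (2 : ℤ) - u i ^ (-2 : ℤ))) *
      (∏ j : Fin n, ∏ k ∈ Finset.Ioi j,
        ((v j / v k - v k / v j) * (v j * v k - (v j)⁻¹ * (v k)⁻¹))) *
      (∏ j : Fin n, (v j - (v j)⁻¹)) := by
  have hAB : ∀ i j, ((u i)^2 + ((u i)^2)⁻¹) + ((v j)^2 + ((v j)^2)⁻¹) ≠ 0 := by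
    intro i j hzero
    have key : (((u i)^2 + ((u i)^2)⁻¹) + ((v j)^2 + ((v j)^2)⁻¹)) * ((u i)^2 * (v j)^2)
        = ((u i)^2 + (v j)^2) * ((u i)^2*(v j)^2+1) := by
      have ea := mul_inv_cancel₀ (pow_ne_zero 2 (hu i))
      have eb := mul_inv_cancel₀ (pow_ne_zero 2 (hv j))
      linear_combination (v j)^2 * ea + (u i)^2 * eb
    apply mul_ne_zero (h2 i j) (h1 i j)
    rw [← key, hzero, zero_mul]
  have hsite : ∀ σ : Perm (Fin n),
      (∏ i, ((v i)⁻¹ * (u (σ i) * (v i)^2 * ((u (σ i))^2-1) * ((v i)^2-1) *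
          (((u (σ i))^2+(v i)^2)*((u (σ i))^2*(v i)^2+1))⁻¹)))
      = (∏ i, (u i * ((u i)^2-1) * ((u i)^2)⁻¹)) *
        ((∏ i, ((v i)⁻¹ * (v i)^2 * ((v i)^2-1) * ((v i)^2)⁻¹)) *
          (∏ i, ((u (σ i))^2 + ((u (σ i))^2)⁻¹ + ((v i)^2 + ((v i)^2)⁻¹))⁻¹)) := by
    intro σ
    rw [Finset.prod_congr rfl fun i _ =>
      sitepoint (u (σ i)) (v i) (hu (σ i)) (hv i) (h2 (σ i) i) (h1 (σ i) i)]
    simp only [Finset.prod_mul_distrib]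
    rw [Equiv.prod_comp σ u, Equiv.prod_comp σ (fun p => ((u p)^2-1)),
      Equiv.prod_comp σ (fun p => ((u p)^2)⁻¹)]
  calc
    (∏ i : Fin n, ∏ j : Fin n,
        ((u i * v j + (u i)⁻¹ * (v j)⁻¹) * (u i / v j + v j / u i))) *
      (∏ i : Fin n, (u i + (u i)⁻¹)) *
      (∑ σ : Equiv.Perm (Fin n), ∑ η : Fin n → ℤˣ,
        (((Equiv.Perm.sign σ * ∏ i, η i : ℤˣ) : ℤ) : K) *
          ((∏ i : Fin n, u (σ i) ^ ((η i : ℤ))) *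
           (∏ j : Fin n, (v j)⁻¹) /
           ∏ i : Fin n, (1 + u (σ i) ^ (2 * ((η i) : ℤ)) * v i ^ (-2 : ℤ))))
      = (∏ i : Fin n, ∏ j : Fin n,
        ((u i * v j + (u i)⁻¹ * (v j)⁻¹) * (u i / v j + v j / u i))) *
      (∏ i : Fin n, (u i + (u i)⁻¹)) *
      (∑ σ : Equiv.Perm (Fin n),
        ((∏ i, (u i * ((u i)^2-1) * ((u i)^2)⁻¹)) *
          (∏ i, ((v i)⁻¹ * (v i)^2 * ((v i)^2-1) * ((v i)^2)⁻¹))) *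
        (((Perm.sign σ : ℤ) : K) *
          ∏ i, (((u (σ i))^2 + ((u (σ i))^2)⁻¹) + ((v i)^2 + ((v i)^2)⁻¹))⁻¹)) := by
      congr 1
      refine Finset.sum_congr rfl fun σ _ => ?_
      rw [inner_sum' (fun i => u (σ i)) v (Perm.sign σ) (fun i => hu (σ i)) hv
        (fun i => h2 (σ i) i) (fun i => h1 (σ i) i), hsite σ]
      ring
    _ = (∏ i : Fin n, ∏ j : Fin n,
        ((u i * v j + (u i)⁻¹ * (v j)⁻¹) * (u i / v j + v j / u i))) *
      (∏ i : Fin n, (u i + (u i)⁻¹)) *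
      (((∏ i, (u i * ((u i)^2-1) * ((u i)^2)⁻¹)) *
          (∏ i, ((v i)⁻¹ * (v i)^2 * ((v i)^2-1) * ((v i)^2)⁻¹))) *
        ((∏ i : Fin n, ∏ j ∈ Ioi i,
            ((((u j)^2 + ((u j)^2)⁻¹) - ((u i)^2 + ((u i)^2)⁻¹)) *
             (((v j)^2 + ((v j)^2)⁻¹) - ((v i)^2 + ((v i)^2)⁻¹)))) /
          (∏ i : Fin n, ∏ j : Fin n,
            (((u i)^2 + ((u i)^2)⁻¹) + ((v j)^2 + ((v j)^2)⁻¹))))) := by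
      rw [← Finset.mul_sum,
        cauchy_sum (fun i => (u i)^2 + ((u i)^2)⁻¹) (fun j => (v j)^2 + ((v j)^2)⁻¹) hAB]
    _ = (∏ i : Fin n, ∏ j : Fin n,
        (((u i)^2 + ((u i)^2)⁻¹) + ((v j)^2 + ((v j)^2)⁻¹))) *
      (∏ i : Fin n, (u i + (u i)⁻¹)) *
      (((∏ i, (u i * ((u i)^2-1) * ((u i)^2)⁻¹)) *
          (∏ i, ((v i)⁻¹ * (v i)^2 * ((v i)^2-1) * ((v i)^2)⁻¹))) *
        ((∏ i : Fin n, ∏ j ∈ Ioi i,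
            ((((u j)^2 + ((u j)^2)⁻¹) - ((u i)^2 + ((u i)^2)⁻¹)) *
             (((v j)^2 + ((v j)^2)⁻¹) - ((v i)^2 + ((v i)^2)⁻¹)))) /
          (∏ i : Fin n, ∏ j : Fin n,
            (((u i)^2 + ((u i)^2)⁻¹) + ((v j)^2 + ((v j)^2)⁻¹))))) := by
      congr 2
      exact Finset.prod_congr rfl fun i _ => Finset.prod_congr rfl fun j _ =>
        prepoint (u i) (v j) (hu i) (hv j)
    _ = (∏ i : Fin n, (u i + (u i)⁻¹)) *
      (((∏ i, (u i * ((u i)^2-1) * ((u i)^2)⁻¹)) *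
          (∏ i, ((v i)⁻¹ * (v i)^2 * ((v i)^2-1) * ((v i)^2)⁻¹))) *
        (∏ i : Fin n, ∏ j ∈ Ioi i,
            ((((u j)^2 + ((u j)^2)⁻¹) - ((u i)^2 + ((u i)^2)⁻¹)) *
             (((v j)^2 + ((v j)^2)⁻¹) - ((v i)^2 + ((v i)^2)⁻¹))))) := by
      have hDen : (∏ i : Fin n, ∏ j : Fin n,
          (((u i)^2 + ((u i)^2)⁻¹) + ((v j)^2 + ((v j)^2)⁻¹))) ≠ 0 :=
        Finset.prod_ne_zero_iff.mpr fun i _ =>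
          Finset.prod_ne_zero_iff.mpr fun j _ => hAB i j
      generalize hXeq : (∏ i : Fin n, ∏ j : Fin n,
          (((u i)^2 + ((u i)^2)⁻¹) + ((v j)^2 + ((v j)^2)⁻¹))) = X at hDen ⊢
      calc X * (∏ i : Fin n, (u i + (u i)⁻¹)) *
          (((∏ i, (u i * ((u i)^2-1) * ((u i)^2)⁻¹)) *
            (∏ i, ((v i)⁻¹ * (v i)^2 * ((v i)^2-1) * ((v i)^2)⁻¹))) *
            ((∏ i : Fin n, ∏ j ∈ Ioi i,
              ((((u j)^2 + ((u j)^2)⁻¹) - ((u i)^2 + ((u i)^2)⁻¹)) *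
               (((v j)^2 + ((v j)^2)⁻¹) - ((v i)^2 + ((v i)^2)⁻¹)))) / X))
          = (X * X⁻¹) * ((∏ i : Fin n, (u i + (u i)⁻¹)) *
            (((∏ i, (u i * ((u i)^2-1) * ((u i)^2)⁻¹)) *
              (∏ i, ((v i)⁻¹ * (v i)^2 * ((v i)^2-1) * ((v i)^2)⁻¹))) *
              (∏ i : Fin n, ∏ j ∈ Ioi i,
                ((((u j)^2 + ((u j)^2)⁻¹) - ((u i)^2 + ((u i)^2)⁻¹)) *
                 (((v j)^2 + ((v j)^2)⁻¹) - ((v i)^2 + ((v i)^2)⁻¹)))))) := by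
            rw [div_eq_mul_inv]; ring
        _ = (∏ i : Fin n, (u i + (u i)⁻¹)) *
            (((∏ i, (u i * ((u i)^2-1) * ((u i)^2)⁻¹)) *
              (∏ i, ((v i)⁻¹ * (v i)^2 * ((v i)^2-1) * ((v i)^2)⁻¹))) *
              (∏ i : Fin n, ∏ j ∈ Ioi i,
                ((((u j)^2 + ((u j)^2)⁻¹) - ((u i)^2 + ((u i)^2)⁻¹)) *
                 (((v j)^2 + ((v j)^2)⁻¹) - ((v i)^2 + ((v i)^2)⁻¹))))) := by
            rw [mul_inv_cancel₀ hDen, one_mul]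
    _ = (∏ i : Fin n, ∏ j ∈ Finset.Ioi i,
        ((u i / u j - u j / u i) * (u i * u j - (u i)⁻¹ * (u j)⁻¹))) *
      (∏ i : Fin n, (u i ^ (2 : ℤ) - u i ^ (-2 : ℤ))) *
      (∏ j : Fin n, ∏ k ∈ Finset.Ioi j,
        ((v j / v k - v k / v j) * (v j * v k - (v j)⁻¹ * (v k)⁻¹))) *
      (∏ j : Fin n, (v j - (v j)⁻¹)) := by
      have hPairs : (∏ i : Fin n, ∏ j ∈ Ioi i,
            ((((u j)^2 + ((u j)^2)⁻¹) - ((u i)^2 + ((u i)^2)⁻¹)) *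
             (((v j)^2 + ((v j)^2)⁻¹) - ((v i)^2 + ((v i)^2)⁻¹))))
          = (∏ i : Fin n, ∏ j ∈ Finset.Ioi i,
              ((u i / u j - u j / u i) * (u i * u j - (u i)⁻¹ * (u j)⁻¹))) *
            (∏ j : Fin n, ∏ k ∈ Finset.Ioi j,
              ((v j / v k - v k / v j) * (v j * v k - (v j)⁻¹ * (v k)⁻¹))) := by
        rw [← Finset.prod_mul_distrib]
        refine Finset.prod_congr rfl fun i _ => ?_
        rw [← Finset.prod_mul_distrib]
        exact Finset.prod_congr rfl fun j _ =>
          pairpoint (u i) (u j) (v i) (v j) (hu i) (hu j) (hv i) (hv j)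
      have hDu : (∏ i : Fin n, (u i + (u i)⁻¹)) *
          (∏ i, (u i * ((u i)^2-1) * ((u i)^2)⁻¹))
          = ∏ i : Fin n, (u i ^ (2 : ℤ) - u i ^ (-2 : ℤ)) := by
        rw [← Finset.prod_mul_distrib]
        exact Finset.prod_congr rfl fun i _ => dupoint (u i) (hu i)
      have hDv : (∏ i, ((v i)⁻¹ * (v i)^2 * ((v i)^2-1) * ((v i)^2)⁻¹))
          = ∏ j : Fin n, (v j - (v j)⁻¹) :=
        Finset.prod_congr rfl fun j _ => dvpoint (v j) (hv j)
      rw [hPairs, ← hDu, hDv]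
      ring

/-- Weyl denominator identity for `B(n,n) = osp(2n+1|2n)` with `Δ^#` of type
`C_n`, in `ℚ(u₁,…,u_n,v₁,…,v_n)`, with `uᵢ = e^{εᵢ/2}`, `vⱼ = e^{δⱼ/2}`;
`W^#` of type `C_n` is modelled by pairs `(σ,η)`, `σ ∈ S_n`, `η ∈ {±1}^n`,
acting by `uᵢ ↦ u_{σ(i)}^{ηᵢ}`, with sign `sgn(σ)·∏ηᵢ`. -/
theorem Bnn_denominator_identity (n : ℕ) (hn : 1 ≤ n)
    (K : Type*) [Field K] [Algebra (MvPolynomial (Fin n ⊕ Fin n) ℚ) K]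
    [IsFractionRing (MvPolynomial (Fin n ⊕ Fin n) ℚ) K]
    (u : Fin n → K) (v : Fin n → K)
    (hu : ∀ i, u i = algebraMap (MvPolynomial (Fin n ⊕ Fin n) ℚ) K
      (MvPolynomial.X (Sum.inl i)))
    (hv : ∀ j, v j = algebraMap (MvPolynomial (Fin n ⊕ Fin n) ℚ) K
      (MvPolynomial.X (Sum.inr j))) :
    (∏ i : Fin n, ∏ j ∈ Finset.Ioi i,
        ((u i / u j - u j / u i) * (u i * u j - (u i)⁻¹ * (u j)⁻¹))) *
      (∏ i : Fin n, (u i ^ (2 : ℤ) - u i ^ (-2 : ℤ))) *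
      (∏ j : Fin n, ∏ k ∈ Finset.Ioi j,
        ((v j / v k - v k / v j) * (v j * v k - (v j)⁻¹ * (v k)⁻¹))) *
      (∏ j : Fin n, (v j - (v j)⁻¹)) =
    (∏ i : Fin n, ∏ j : Fin n,
        ((u i * v j + (u i)⁻¹ * (v j)⁻¹) * (u i / v j + v j / u i))) *
      (∏ i : Fin n, (u i + (u i)⁻¹)) *
      ∑ σ : Equiv.Perm (Fin n), ∑ η : Fin n → ℤˣ,
        (((Equiv.Perm.sign σ * ∏ i, η i : ℤˣ) : ℤ) : K) *
          ((∏ i : Fin n, u (σ i) ^ ((η i : ℤ))) *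
           (∏ j : Fin n, (v j)⁻¹) /
           ∏ i : Fin n, (1 + u (σ i) ^ (2 * ((η i) : ℤ)) * v i ^ (-2 : ℤ))) := by
  have hinj : Function.Injective (algebraMap (MvPolynomial (Fin n ⊕ Fin n) ℚ) K) :=
    IsFractionRing.injective _ _
  have hne : ∀ p : MvPolynomial (Fin n ⊕ Fin n) ℚ,
      MvPolynomial.eval (fun _ => (1:ℚ)) p ≠ 0 →
      algebraMap (MvPolynomial (Fin n ⊕ Fin n) ℚ) K p ≠ 0 := by
    intro p hp h0
    apply hp
    have hp0 : p = 0 := hinj (by rw [h0, map_zero])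
    rw [hp0, map_zero]
  have hu0 : ∀ i, u i ≠ 0 := fun i => by
    rw [hu i]; exact hne _ (by simp)
  have hv0 : ∀ j, v j ≠ 0 := fun j => by
    rw [hv j]; exact hne _ (by simp)
  have h2 : ∀ i j, (u i)^2 + (v j)^2 ≠ 0 := fun i j => by
    rw [hu i, hv j, ← map_pow, ← map_pow, ← map_add]
    exact hne _ (by norm_num)
  have h1 : ∀ i j, (u i)^2 * (v j)^2 + 1 ≠ 0 := fun i j => by
    rw [hu i, hv j, ← map_pow, ← map_pow, ← _root_.map_mul _ _ _,
      ← map_one (algebraMap (MvPolynomial (Fin n ⊕ Fin n) ℚ) K), ← map_add]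
    exact hne _ (by norm_num)
  exact (rhs_eval u v hu0 hv0 h2 h1).symm
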